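/- Define ψ : ℝ → ℝ by ψ(ξ) = 2·∫₀^{1/e} (1 − cos(ξx))·log(1/x)·x^{−1} dx. Then: (i) ψ(ξ) > 0 for every ξ ≠ 0; and (ii) there exist constants 0 < c₁ ≤ c₂ such that c₁·(log ξ)² ≤ ψ(ξ) ≤ c₂·(log ξ)² for every ξ ≥ e². -/

import Mathlib

open MeasureTheory Set

namespace Stmt18Aux

noncomputable def w (x : ℝ) : ℝ := Real.log (1 / x) / x

noncomputable def f (ξ x : ℝ) : ℝ := (1 - Real.cos (ξ * x)) * Real.log (1 / x) / x

lemma f_eq (ξ x : ℝ) : f ξ x = (1 - Real.cos (ξ * x)) * w x := by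
  unfold f w; rw [mul_div_assoc]

lemma one_sub_cos_eq (t : ℝ) : 1 - Real.cos t = 2 * Real.sin (t / 2) ^ 2 := by
  have h := Real.cos_two_mul (t / 2)
  have h2 : 2 * (t / 2) = t := by ring
  rw [h2] at h
  have h3 := Real.sin_sq_add_cos_sq (t / 2)
  linarith

lemma one_sub_cos_nonneg (t : ℝ) : 0 ≤ 1 - Real.cos t := by
  linarith [Real.cos_le_one t]

lemma one_sub_cos_le_two (t : ℝ) : 1 - Real.cos t ≤ 2 := by
  linarith [Real.neg_one_le_cos t]

lemma one_sub_cos_le_sq (t : ℝ) : 1 - Real.cos t ≤ t ^ 2 / 2 := by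
  rw [one_sub_cos_eq]
  have h := Real.sin_sq_le_sq (x := t / 2)
  nlinarith

lemma one_sub_cos_ge {t : ℝ} (h0 : 0 ≤ t) (h1 : t ≤ 1) :
    9 / 32 * t ^ 2 ≤ 1 - Real.cos t := by
  rcases eq_or_lt_of_le h0 with h | h
  · rw [← h]; simp
  · rw [one_sub_cos_eq]
    have hs := Real.sin_gt_sub_cube (by linarith : 0 < t / 2)
    have ht3 : t ^ 3 ≤ t := by nlinarith [mul_nonneg (mul_nonneg h.le (sub_nonneg.2 h1)) (by linarith : (0:ℝ) ≤ 1 + t)]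
    have hs0 : 3 / 8 * t ≤ Real.sin (t / 2) := by nlinarith
    nlinarith

lemma x_log_le {x : ℝ} (h0 : 0 < x) : x * Real.log (1 / x) ≤ 1 := by
  have h := Real.log_le_sub_one_of_pos (show (0:ℝ) < 1 / x by positivity)
  have h2 := mul_le_mul_of_nonneg_left h h0.le
  have hx : x * (1 / x) = 1 := by field_simp
  nlinarith

lemma w_nonneg {x : ℝ} (h0 : 0 < x) (h1 : x ≤ 1) : 0 ≤ w x :=
  div_nonneg (Real.log_nonneg (one_le_one_div h0 h1)) h0.le

lemma w_anti {x y : ℝ} (hx : 0 < x) (hxy : x ≤ y) (hy : y ≤ 1) : w y ≤ w x := by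
  have hy0 : 0 < y := lt_of_lt_of_le hx hxy
  unfold w
  rw [div_le_div_iff₀ hy0 hx]
  have h1 : 0 ≤ Real.log (1 / y) := Real.log_nonneg (one_le_one_div hy0 hy)
  have h2 : Real.log (1 / y) ≤ Real.log (1 / x) :=
    Real.log_le_log (by positivity) (one_div_le_one_div_of_le hx hxy)
  nlinarith

lemma f_nonneg {ξ x : ℝ} (h0 : 0 < x) (h1 : x ≤ 1) : 0 ≤ f ξ x := by
  rw [f_eq]; exact mul_nonneg (one_sub_cos_nonneg _) (w_nonneg h0 h1)

lemma inv_e_lt_one : (Real.exp 1)⁻¹ ≤ 1 := by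
  apply inv_le_one_of_one_le₀
  linarith [Real.exp_one_gt_d9]

lemma inv_e_gt : (0.36 : ℝ) < (Real.exp 1)⁻¹ := by
  rw [lt_inv_comm₀ (by norm_num) (Real.exp_pos 1)]
  linarith [Real.exp_one_lt_d9]


lemma w_eq' : w = fun x => -Real.log x / x := by
  funext x; unfold w; rw [one_div, Real.log_inv]

lemma w_contOn : ContinuousOn w {x : ℝ | 0 < x} := by
  rw [w_eq']
  refine ContinuousOn.div ?_ continuousOn_id fun x hx => ne_of_gt hx
  exact (Real.continuousOn_log.mono fun x hx => ne_of_gt hx).neg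

lemma f_funext (ξ : ℝ) : f ξ = fun x => (1 - Real.cos (ξ * x)) * w x :=
  funext fun x => f_eq ξ x

lemma f_contOn (ξ : ℝ) : ContinuousOn (f ξ) {x : ℝ | 0 < x} := by
  rw [f_funext]
  exact (Continuous.continuousOn (by continuity)).mul w_contOn

lemma f_le_of_mem {ξ x : ℝ} (h0 : 0 < x) (h1 : x ≤ 1) : f ξ x ≤ ξ ^ 2 / 2 := by
  rw [f_eq]
  have hw : 0 ≤ w x := w_nonneg h0 h1
  have key : (1 - Real.cos (ξ * x)) * w x ≤ (ξ * x) ^ 2 / 2 * w x :=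
    mul_le_mul_of_nonneg_right (one_sub_cos_le_sq _) hw
  have heq : (ξ * x) ^ 2 / 2 * w x = ξ ^ 2 / 2 * (x * Real.log (1 / x)) := by
    unfold w; field_simp
  have hle : ξ ^ 2 / 2 * (x * Real.log (1 / x)) ≤ ξ ^ 2 / 2 * 1 :=
    mul_le_mul_of_nonneg_left (x_log_le h0) (by positivity)
  rw [heq] at key; linarith

set_option maxHeartbeats 1000000 in
lemma f_integrable (ξ : ℝ) : IntegrableOn (f ξ) (Ioo (0:ℝ) (Real.exp 1)⁻¹) := by
  have hmeas : MeasurableSet (Ioo (0:ℝ) (Real.exp 1)⁻¹) := measurableSet_Ioo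
  have hconst : IntegrableOn (fun _ : ℝ => ξ ^ 2 / 2) (Ioo (0:ℝ) (Real.exp 1)⁻¹) volume :=
    integrableOn_const measure_Ioo_lt_top.ne
  apply Integrable.mono' hconst
  · exact ((f_contOn ξ).mono fun x hx => hx.1).aestronglyMeasurable hmeas
  · filter_upwards [ae_restrict_mem hmeas] with x hx
    have h0 : 0 < x := hx.1
    have h1 : x ≤ 1 := le_trans hx.2.le inv_e_lt_one
    rw [Real.norm_eq_abs, abs_of_nonneg (f_nonneg h0 h1)]
    exact f_le_of_mem h0 h1

lemma f_integrableOn_Ioc {ξ a b : ℝ} (ha : 0 ≤ a) (hb : b ≤ (Real.exp 1)⁻¹) :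
    IntegrableOn (f ξ) (Ioc a b) := by
  have h1 : IntegrableOn (f ξ) (Ioc 0 (Real.exp 1)⁻¹) := by
    rw [integrableOn_Ioc_iff_integrableOn_Ioo]; exact f_integrable ξ
  exact h1.mono_set (Ioc_subset_Ioc ha hb)

lemma f_intervalIntegrable {ξ a b : ℝ} (ha : 0 ≤ a) (hab : a ≤ b)
    (hb : b ≤ (Real.exp 1)⁻¹) : IntervalIntegrable (f ξ) volume a b := by
  rw [intervalIntegrable_iff_integrableOn_Ioc_of_le hab]
  exact f_integrableOn_Ioc ha hb

lemma w_intervalIntegrable {a b : ℝ} (ha : 0 < a) (hab : a ≤ b) :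
    IntervalIntegrable w volume a b := by
  apply ContinuousOn.intervalIntegrable
  apply w_contOn.mono
  rw [uIcc_of_le hab]
  intro x hx
  exact lt_of_lt_of_le ha hx.1

lemma integral_w {a b : ℝ} (ha : 0 < a) (hab : a ≤ b) :
    ∫ x in a..b, w x = (Real.log a ^ 2 - Real.log b ^ 2) / 2 := by
  have key : ∀ x ∈ uIcc a b, HasDerivAt (fun y => -(Real.log y ^ 2) / 2) (w x) x := by
    intro x hx
    rw [uIcc_of_le hab] at hx
    have hx0 : 0 < x := lt_of_lt_of_le ha hx.1
    have h1 : HasDerivAt (fun y => Real.log y ^ 2)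
        ((2 : ℕ) * Real.log x ^ (2 - 1) * x⁻¹) x :=
      (Real.hasDerivAt_log (ne_of_gt hx0)).pow 2
    have h2 := h1.neg.div_const 2
    refine h2.congr_deriv ?_
    unfold w
    rw [one_div, Real.log_inv]
    field_simp
    ring
  rw [intervalIntegral.integral_eq_sub_of_hasDerivAt key (w_intervalIntegrable ha hab)]
  ring

lemma integral_one_sub_cos {ξ : ℝ} (hξ : ξ ≠ 0) (a : ℝ) :
    ∫ x in a..(a + 2 * Real.pi / ξ), (1 - Real.cos (ξ * x)) = 2 * Real.pi / ξ := by
  have key : ∀ x ∈ uIcc a (a + 2 * Real.pi / ξ),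
      HasDerivAt (fun y => y - Real.sin (ξ * y) / ξ) (1 - Real.cos (ξ * x)) x := by
    intro x _
    have h1 : HasDerivAt (fun y : ℝ => ξ * y) ξ x := by
      simpa using (hasDerivAt_id x).const_mul ξ
    have h2 : HasDerivAt (fun y => Real.sin (ξ * y)) (Real.cos (ξ * x) * ξ) x :=
      (Real.hasDerivAt_sin (ξ * x)).comp x h1
    have h3 := (hasDerivAt_id x).sub (h2.div_const ξ)
    refine h3.congr_deriv ?_
    field_simp
  rw [intervalIntegral.integral_eq_sub_of_hasDerivAt key
    (Continuous.intervalIntegrable (by continuity) _ _)]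
  have hsin : Real.sin (ξ * (a + 2 * Real.pi / ξ)) = Real.sin (ξ * a) := by
    have heq : ξ * (a + 2 * Real.pi / ξ) = ξ * a + 2 * Real.pi := by field_simp
    rw [heq, Real.sin_add_two_pi]
  rw [hsin]
  ring
lemma per_period {ξ a : ℝ} (hξ : 0 < ξ) (ha : 0 ≤ a)
    (hb : a + 2 * (2 * Real.pi / ξ) ≤ (Real.exp 1)⁻¹) :
    ∫ x in (a + 2 * Real.pi / ξ)..(a + 2 * (2 * Real.pi / ξ)), w x ≤
      ∫ x in a..(a + 2 * Real.pi / ξ), f ξ x := by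
  have hpi := Real.pi_pos
  have hT : 0 < 2 * Real.pi / ξ := by positivity
  have he1 := inv_e_lt_one
  have haT : 0 < a + 2 * Real.pi / ξ := by linarith
  have haT1 : a + 2 * Real.pi / ξ ≤ 1 := by linarith
  have hmono : ∫ x in a..(a + 2 * Real.pi / ξ),
      (1 - Real.cos (ξ * x)) * w (a + 2 * Real.pi / ξ)
      ≤ ∫ x in a..(a + 2 * Real.pi / ξ), f ξ x := by
    apply intervalIntegral.integral_mono_on (by linarith)
      (Continuous.intervalIntegrable (by continuity) _ _)
      (f_intervalIntegrable ha (by linarith) (by linarith))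
    intro x hx
    rcases (le_trans ha hx.1).lt_or_eq with h | h
    · rw [f_eq]
      exact mul_le_mul_of_nonneg_left (w_anti h hx.2 haT1) (one_sub_cos_nonneg _)
    · rw [← h]
      simp [f, Real.cos_zero]
  have hval : ∫ x in a..(a + 2 * Real.pi / ξ),
      (1 - Real.cos (ξ * x)) * w (a + 2 * Real.pi / ξ)
      = w (a + 2 * Real.pi / ξ) * (2 * Real.pi / ξ) := by
    rw [intervalIntegral.integral_mul_const, integral_one_sub_cos (ne_of_gt hξ)]
    ring
  have hB : ∫ x in (a + 2 * Real.pi / ξ)..(a + 2 * (2 * Real.pi / ξ)), w x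
      ≤ w (a + 2 * Real.pi / ξ) * (2 * Real.pi / ξ) := by
    have hmono2 : ∫ x in (a + 2 * Real.pi / ξ)..(a + 2 * (2 * Real.pi / ξ)), w x
        ≤ ∫ x in (a + 2 * Real.pi / ξ)..(a + 2 * (2 * Real.pi / ξ)),
            w (a + 2 * Real.pi / ξ) := by
      apply intervalIntegral.integral_mono_on (by linarith)
        (w_intervalIntegrable haT (by linarith)) intervalIntegrable_const
      intro x hx
      exact w_anti haT hx.1 (by linarith [hx.2])
    rw [intervalIntegral.integral_const, smul_eq_mul] at hmono2
    have he : (a + 2 * (2 * Real.pi / ξ) - (a + 2 * Real.pi / ξ)) = 2 * Real.pi / ξ := by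
      ring
    rw [he] at hmono2
    linarith [hmono2]
  linarith

lemma lower_sum {ξ : ℝ} (hξ : 0 < ξ) :
    ∀ n : ℕ, ((n : ℝ) + 1) * (2 * Real.pi / ξ) ≤ (Real.exp 1)⁻¹ →
      ∫ x in (2 * Real.pi / ξ)..(((n : ℝ) + 1) * (2 * Real.pi / ξ)), w x ≤
        ∫ x in (0 : ℝ)..((n : ℝ) * (2 * Real.pi / ξ)), f ξ x := by
  have hpi := Real.pi_pos
  have hT : 0 < 2 * Real.pi / ξ := by positivity
  intro n
  induction n with
  | zero => intro _; norm_num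
  | succ n ih =>
    intro hval
    push_cast at hval ⊢
    have h1 : ((n : ℝ) + 1) * (2 * Real.pi / ξ) ≤ (Real.exp 1)⁻¹ := by nlinarith
    have ihn := ih (by push_cast; linarith)
    have key := per_period hξ (a := (n : ℝ) * (2 * Real.pi / ξ)) (by positivity) (by nlinarith)
    have e1 : (n : ℝ) * (2 * Real.pi / ξ) + 2 * Real.pi / ξ
        = ((n : ℝ) + 1) * (2 * Real.pi / ξ) := by ring
    have e2 : (n : ℝ) * (2 * Real.pi / ξ) + 2 * (2 * Real.pi / ξ)
        = ((n : ℝ) + 1 + 1) * (2 * Real.pi / ξ) := by ring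
    rw [e1, e2] at key
    have hnn : (n : ℝ) * (2 * Real.pi / ξ) ≤ ((n : ℝ) + 1) * (2 * Real.pi / ξ) := by
      nlinarith
    have hsplitf : ∫ x in (0 : ℝ)..(((n : ℝ) + 1) * (2 * Real.pi / ξ)), f ξ x =
        (∫ x in (0 : ℝ)..((n : ℝ) * (2 * Real.pi / ξ)), f ξ x) +
          ∫ x in ((n : ℝ) * (2 * Real.pi / ξ))..(((n : ℝ) + 1) * (2 * Real.pi / ξ)), f ξ x :=
      (intervalIntegral.integral_add_adjacent_intervals
        (f_intervalIntegrable le_rfl (by positivity) (by linarith))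
        (f_intervalIntegrable (by positivity) hnn h1)).symm
    have hT1 : 2 * Real.pi / ξ ≤ ((n : ℝ) + 1) * (2 * Real.pi / ξ) := by nlinarith
    have hT2 : ((n : ℝ) + 1) * (2 * Real.pi / ξ) ≤ ((n : ℝ) + 1 + 1) * (2 * Real.pi / ξ) := by
      nlinarith
    have hsplitw : ∫ x in (2 * Real.pi / ξ)..(((n : ℝ) + 1 + 1) * (2 * Real.pi / ξ)), w x =
        (∫ x in (2 * Real.pi / ξ)..(((n : ℝ) + 1) * (2 * Real.pi / ξ)), w x) +
          ∫ x in (((n : ℝ) + 1) * (2 * Real.pi / ξ))..(((n : ℝ) + 1 + 1) * (2 * Real.pi / ξ)), w x :=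
      (intervalIntegral.integral_add_adjacent_intervals
        (w_intervalIntegrable hT hT1)
        (w_intervalIntegrable (by positivity) hT2)).symm
    rw [hsplitf, hsplitw]
    linarith [ihn, key]

lemma exp_two_gt : (7 : ℝ) < Real.exp 2 := by
  have h := Real.exp_one_gt_d9
  have h2 : Real.exp 2 = Real.exp 1 * Real.exp 1 := by
    rw [← Real.exp_add]; norm_num
  nlinarith

lemma two_pi_lt : 2 * Real.pi < 6.3 := by linarith [Real.pi_lt_d2]

lemma log_two_pi_le : Real.log (2 * Real.pi) ≤ 2 := by
  rw [Real.log_le_iff_le_exp (by positivity)]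
  linarith [two_pi_lt, exp_two_gt]

lemma exp_twelve_gt : (100 : ℝ) ≤ Real.exp 12 := by
  have h2 : (7 : ℝ) < Real.exp 2 := exp_two_gt
  have he : Real.exp 12 = Real.exp 2 ^ (6 : ℕ) := by
    rw [← Real.exp_nat_mul]; norm_num
  have : (7 : ℝ) ^ (6 : ℕ) ≤ Real.exp 2 ^ (6 : ℕ) :=
    pow_le_pow_left₀ (by norm_num) h2.le 6
  rw [he]; nlinarith [this]
set_option maxHeartbeats 1000000 in
lemma lower_large {ξ : ℝ} (hξ : Real.exp 12 ≤ ξ) :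
    1 / 2 * Real.log ξ ^ 2 ≤ 2 * ∫ x in Ioo (0 : ℝ) (Real.exp 1)⁻¹, f ξ x := by
  have hpi := Real.pi_pos
  have hξ100 : (100 : ℝ) ≤ ξ := le_trans exp_twelve_gt hξ
  have hξ0 : (0 : ℝ) < ξ := by linarith
  have hT : 0 < 2 * Real.pi / ξ := by positivity
  have hTsmall : 2 * Real.pi / ξ ≤ 0.063 := by
    rw [div_le_iff₀ hξ0]; nlinarith [two_pi_lt]
  have hie := inv_e_gt
  have hie1 := inv_e_lt_one
  obtain ⟨m, hm1, hmT, hmT2⟩ : ∃ m : ℕ, 1 ≤ m ∧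
      (m : ℝ) * (2 * Real.pi / ξ) ≤ (Real.exp 1)⁻¹ ∧
      (Real.exp 1)⁻¹ - 2 * Real.pi / ξ ≤ (m : ℝ) * (2 * Real.pi / ξ) := by
    refine ⟨⌊(Real.exp 1)⁻¹ / (2 * Real.pi / ξ)⌋₊, ?_, ?_, ?_⟩
    · apply Nat.le_floor
      rw [Nat.cast_one, le_div_iff₀ hT]; linarith
    · rw [← le_div_iff₀ hT]
      exact Nat.floor_le (by positivity)
    · have h := Nat.lt_floor_add_one ((Real.exp 1)⁻¹ / (2 * Real.pi / ξ))
      rw [div_lt_iff₀ hT] at h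
      nlinarith [h]
  have hcast : ((m - 1 : ℕ) : ℝ) = (m : ℝ) - 1 := by
    push_cast [hm1]; ring
  have hsum := lower_sum hξ0 (m - 1) (by
    rw [hcast]
    have e : ((m : ℝ) - 1 + 1) * (2 * Real.pi / ξ) = (m : ℝ) * (2 * Real.pi / ξ) := by ring
    rw [e]; exact hmT)
  rw [hcast] at hsum
  have e : ((m : ℝ) - 1 + 1) * (2 * Real.pi / ξ) = (m : ℝ) * (2 * Real.pi / ξ) := by ring
  rw [e] at hsum
  have hval0 : 0 ≤ ((m : ℝ) - 1) * (2 * Real.pi / ξ) := by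
    have h1 : (1 : ℝ) ≤ (m : ℝ) := by exact_mod_cast hm1
    nlinarith
  have hRHS : ∫ x in (0 : ℝ)..(((m : ℝ) - 1) * (2 * Real.pi / ξ)), f ξ x ≤
      ∫ x in Ioo (0 : ℝ) (Real.exp 1)⁻¹, f ξ x := by
    rw [intervalIntegral.integral_of_le hval0, integral_Ioc_eq_integral_Ioo]
    apply setIntegral_mono_set (f_integrable ξ)
    · filter_upwards [ae_restrict_mem measurableSet_Ioo] with x hx
      exact f_nonneg hx.1 (le_trans hx.2.le inv_e_lt_one)
    · apply HasSubset.Subset.eventuallyLE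
      intro x hx
      refine ⟨hx.1, lt_of_lt_of_le hx.2 ?_⟩
      nlinarith [hmT, hT]
  have hc' : (0.29 : ℝ) ≤ (Real.exp 1)⁻¹ - 2 * Real.pi / ξ := by linarith
  have hwnonneg : 0 ≤ ∫ x in ((Real.exp 1)⁻¹ - 2 * Real.pi / ξ)..((m : ℝ) * (2 * Real.pi / ξ)), w x := by
    apply intervalIntegral.integral_nonneg (by linarith)
    intro x hx
    exact w_nonneg (by linarith [hx.1]) (le_trans hx.2 (le_trans hmT inv_e_lt_one))
  have hsplit : ∫ x in (2 * Real.pi / ξ)..((m : ℝ) * (2 * Real.pi / ξ)), w x =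
      (∫ x in (2 * Real.pi / ξ)..((Real.exp 1)⁻¹ - 2 * Real.pi / ξ), w x) +
        ∫ x in ((Real.exp 1)⁻¹ - 2 * Real.pi / ξ)..((m : ℝ) * (2 * Real.pi / ξ)), w x :=
    (intervalIntegral.integral_add_adjacent_intervals
      (w_intervalIntegrable hT (by linarith))
      (w_intervalIntegrable (by linarith) (by linarith))).symm
  have hWval : ∫ x in (2 * Real.pi / ξ)..((Real.exp 1)⁻¹ - 2 * Real.pi / ξ), w x =
      (Real.log (2 * Real.pi / ξ) ^ 2 - Real.log ((Real.exp 1)⁻¹ - 2 * Real.pi / ξ) ^ 2) / 2 :=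
    integral_w hT (by linarith)
  have hL : (12 : ℝ) ≤ Real.log ξ := (Real.le_log_iff_exp_le hξ0).2 hξ
  have hlogT : Real.log (2 * Real.pi / ξ) = Real.log (2 * Real.pi) - Real.log ξ :=
    Real.log_div (by positivity) (ne_of_gt hξ0)
  have hl2π0 : 0 ≤ Real.log (2 * Real.pi) := Real.log_nonneg (by nlinarith [Real.pi_gt_three])
  have hl2π2 : Real.log (2 * Real.pi) ≤ 2 := log_two_pi_le
  have hsq : 9 / 16 * Real.log ξ ^ 2 ≤ Real.log (2 * Real.pi / ξ) ^ 2 := by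
    rw [hlogT, show (Real.log (2 * Real.pi) - Real.log ξ) ^ 2
        = (Real.log ξ - Real.log (2 * Real.pi)) ^ 2 from by ring]
    have h1 : 3 / 4 * Real.log ξ ≤ Real.log ξ - Real.log (2 * Real.pi) := by linarith
    have h2 : (3 / 4 * Real.log ξ) ^ 2 ≤ (Real.log ξ - Real.log (2 * Real.pi)) ^ 2 :=
      pow_le_pow_left₀ (by linarith) h1 2
    linarith [h2]
  have hc'1 : (Real.exp 1)⁻¹ - 2 * Real.pi / ξ ≤ 1 := by linarith
  have hlogc'a : Real.log ((Real.exp 1)⁻¹ - 2 * Real.pi / ξ) ≤ 0 :=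
    Real.log_nonpos (by linarith) hc'1
  have hlogc'b : -3 ≤ Real.log ((Real.exp 1)⁻¹ - 2 * Real.pi / ξ) := by
    have h1 : Real.log ((Real.exp 1)⁻¹ - 2 * Real.pi / ξ)⁻¹ ≤
        ((Real.exp 1)⁻¹ - 2 * Real.pi / ξ)⁻¹ - 1 :=
      Real.log_le_sub_one_of_pos (by positivity)
    have h2 : ((Real.exp 1)⁻¹ - 2 * Real.pi / ξ)⁻¹ ≤ (0.29 : ℝ)⁻¹ := by
      apply inv_anti₀ (by norm_num) hc'
    rw [Real.log_inv] at h1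
    norm_num at h2
    linarith
  have hlogc'sq : Real.log ((Real.exp 1)⁻¹ - 2 * Real.pi / ξ) ^ 2 ≤ 9 := by
    nlinarith [hlogc'a, hlogc'b]
  have hL2 : (144 : ℝ) ≤ Real.log ξ ^ 2 := by nlinarith [hL]
  linarith [hsum, hRHS, hsplit, hWval, hwnonneg, hsq, hlogc'sq, hL2]
lemma f_nonneg_ae (ξ : ℝ) :
    0 ≤ᵐ[volume.restrict (Ioo (0 : ℝ) (Real.exp 1)⁻¹)] f ξ := by
  filter_upwards [ae_restrict_mem measurableSet_Ioo] with x hx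
  exact f_nonneg hx.1 (le_trans hx.2.le inv_e_lt_one)

lemma lower_mid {ξ : ℝ} (h2 : Real.exp 2 ≤ ξ) :
    9 / 128 * Real.log ξ ≤ 2 * ∫ x in Ioo (0 : ℝ) (Real.exp 1)⁻¹, f ξ x := by
  have hξ0 : (0 : ℝ) < ξ := lt_of_lt_of_le (Real.exp_pos 2) h2
  have hξ7 : (7 : ℝ) ≤ ξ := le_trans exp_two_gt.le h2
  have hL0 : 0 ≤ Real.log ξ := Real.log_nonneg (by linarith)
  have hexp1 : Real.exp 1 < ξ := by linarith [Real.exp_one_lt_d9]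
  have hinvlt : 1 / ξ < (Real.exp 1)⁻¹ := by
    rw [one_div]
    exact inv_strictAnti₀ (Real.exp_pos 1) hexp1
  have hpb : ∀ x ∈ Ioc (1 / (2 * ξ)) (1 / ξ), 9 / 128 * (ξ * Real.log ξ) ≤ f ξ x := by
    intro x hx
    have hx0 : (0 : ℝ) < x := lt_trans (by positivity) hx.1
    have hxle : ξ * x ≤ 1 := by
      have := (le_div_iff₀ hξ0).mp hx.2
      linarith [this]
    have hxge : 1 / 2 ≤ ξ * x := by
      have h := hx.1
      rw [div_lt_iff₀ (by positivity : (0:ℝ) < 2 * ξ)] at h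
      nlinarith
    have hcos : 9 / 32 * (ξ * x) ^ 2 ≤ 1 - Real.cos (ξ * x) :=
      one_sub_cos_ge (by positivity) hxle
    have h1x : ξ ≤ 1 / x := by
      rw [le_div_iff₀ hx0]; linarith [hxle]
    have hlog : Real.log ξ ≤ Real.log (1 / x) := Real.log_le_log hξ0 h1x
    have hlog0 : 0 ≤ Real.log (1 / x) := le_trans hL0 hlog
    have hw : Real.log ξ * ξ ≤ w x := by
      have hmm : Real.log ξ * ξ ≤ Real.log (1 / x) * (1 / x) :=
        mul_le_mul hlog h1x hξ0.le hlog0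
      have hwe : w x = Real.log (1 / x) * (1 / x) := by
        unfold w; rw [mul_one_div]
      rw [hwe]; exact hmm
    have step1 : 9 / 128 * (ξ * Real.log ξ) ≤ 9 / 32 * (ξ * x) ^ 2 * (Real.log ξ * ξ) := by
      have hq : 1 / 4 ≤ (ξ * x) ^ 2 := by nlinarith [hxge]
      nlinarith [mul_le_mul_of_nonneg_right hq (mul_nonneg hL0 hξ0.le)]
    have step2 : 9 / 32 * (ξ * x) ^ 2 * (Real.log ξ * ξ) ≤ (1 - Real.cos (ξ * x)) * w x :=
      mul_le_mul hcos hw (mul_nonneg hL0 hξ0.le) (one_sub_cos_nonneg _)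
    rw [f_eq]; linarith
  have hfi : IntegrableOn (f ξ) (Ioc (1 / (2 * ξ)) (1 / ξ)) :=
    f_integrableOn_Ioc (by positivity) (le_of_lt hinvlt)
  have hconst : (∫ _x in Ioc (1 / (2 * ξ)) (1 / ξ), (9 / 128 * (ξ * Real.log ξ))) ≤
      ∫ x in Ioc (1 / (2 * ξ)) (1 / ξ), f ξ x :=
    setIntegral_mono_on
      (integrableOn_const measure_Ioc_lt_top.ne) hfi measurableSet_Ioc hpb
  have hvol : (∫ _x in Ioc (1 / (2 * ξ)) (1 / ξ), (9 / 128 * (ξ * Real.log ξ)))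
      = (1 / ξ - 1 / (2 * ξ)) * (9 / 128 * (ξ * Real.log ξ)) := by
    have hhalf : 1 / ξ - 1 / (2 * ξ) = 1 / (2 * ξ) := by field_simp; ring
    rw [setIntegral_const, smul_eq_mul, measureReal_def, Real.volume_Ioc,
      ENNReal.toReal_ofReal (by rw [hhalf]; positivity)]
  have hsub : ∫ x in Ioc (1 / (2 * ξ)) (1 / ξ), f ξ x ≤
      ∫ x in Ioo (0 : ℝ) (Real.exp 1)⁻¹, f ξ x := by
    apply setIntegral_mono_set (f_integrable ξ) (f_nonneg_ae ξ)
    apply HasSubset.Subset.eventuallyLE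
    intro x hx
    exact ⟨lt_trans (by positivity) hx.1, lt_of_le_of_lt hx.2 hinvlt⟩
  have hid : (1 / ξ - 1 / (2 * ξ)) * (9 / 128 * (ξ * Real.log ξ))
      = 9 / 256 * Real.log ξ := by
    field_simp; ring
  linarith [hconst, hvol, hsub, hid]
lemma upper {ξ : ℝ} (h2 : Real.exp 2 ≤ ξ) :
    2 * ∫ x in Ioo (0 : ℝ) (Real.exp 1)⁻¹, f ξ x ≤ 3 * Real.log ξ ^ 2 := by
  have hξ0 : (0 : ℝ) < ξ := lt_of_lt_of_le (Real.exp_pos 2) h2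
  have hξ7 : (7 : ℝ) ≤ ξ := le_trans exp_two_gt.le h2
  have hL : 2 ≤ Real.log ξ := (Real.le_log_iff_exp_le hξ0).2 h2
  have hexp1 : Real.exp 1 ≤ ξ := by linarith [Real.exp_one_lt_d9]
  have hinv : 1 / ξ ≤ (Real.exp 1)⁻¹ := by
    rw [one_div]
    exact inv_anti₀ (Real.exp_pos 1) hexp1
  have hIoo : ∫ x in Ioo (0 : ℝ) (Real.exp 1)⁻¹, f ξ x
      = ∫ x in (0 : ℝ)..(Real.exp 1)⁻¹, f ξ x := by
    rw [intervalIntegral.integral_of_le (by positivity), integral_Ioc_eq_integral_Ioo]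
  have hsplit : ∫ x in (0 : ℝ)..(Real.exp 1)⁻¹, f ξ x =
      (∫ x in (0 : ℝ)..(1 / ξ), f ξ x) + ∫ x in (1 / ξ)..(Real.exp 1)⁻¹, f ξ x :=
    (intervalIntegral.integral_add_adjacent_intervals
      (f_intervalIntegrable le_rfl (by positivity) hinv)
      (f_intervalIntegrable (by positivity) hinv le_rfl)).symm
  have hp1 : ∫ x in (0 : ℝ)..(1 / ξ), f ξ x ≤ (Real.log ξ + 1) / 2 := by
    have hpb : ∀ x ∈ Icc (0 : ℝ) (1 / ξ), f ξ x ≤ ξ * (Real.log ξ + 1) / 2 := by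
      intro x hx
      rcases hx.1.lt_or_eq with h0 | h0
      · have hxξ : (0 : ℝ) < ξ * x := by positivity
        have hfac : (1 : ℝ) / x = ξ * (1 / (ξ * x)) := by field_simp
        have hlogsplit : Real.log (1 / x) = Real.log ξ + Real.log (1 / (ξ * x)) := by
          rw [hfac, Real.log_mul (ne_of_gt hξ0) (by positivity)]
        have hxlogξ : x * Real.log ξ ≤ 1 / ξ * Real.log ξ :=
          mul_le_mul_of_nonneg_right hx.2 (by linarith)
        have ht : ξ * x * Real.log (1 / (ξ * x)) ≤ 1 := x_log_le hxξ
        have ht2 : x * Real.log (1 / (ξ * x)) ≤ 1 / ξ := by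
          have heq : x * Real.log (1 / (ξ * x))
              = 1 / ξ * (ξ * x * Real.log (1 / (ξ * x))) := by field_simp
          rw [heq]
          calc 1 / ξ * (ξ * x * Real.log (1 / (ξ * x))) ≤ 1 / ξ * 1 :=
                mul_le_mul_of_nonneg_left ht (by positivity)
            _ = 1 / ξ := mul_one _
        have hxlog : x * Real.log (1 / x) ≤ (Real.log ξ + 1) / ξ := by
          rw [hlogsplit, mul_add]
          have : 1 / ξ * Real.log ξ + 1 / ξ = (Real.log ξ + 1) / ξ := by ring
          linarith [hxlogξ, ht2]
        -- f ξ x ≤ ξ^2/2 * (x * log (1/x))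
        have hw : 0 ≤ w x := w_nonneg h0 (le_trans hx.2 (by rw [div_le_one hξ0]; linarith))
        have key : (1 - Real.cos (ξ * x)) * w x ≤ (ξ * x) ^ 2 / 2 * w x :=
          mul_le_mul_of_nonneg_right (one_sub_cos_le_sq _) hw
        have heq2 : (ξ * x) ^ 2 / 2 * w x = ξ ^ 2 / 2 * (x * Real.log (1 / x)) := by
          unfold w; field_simp
        have hfin : ξ ^ 2 / 2 * (x * Real.log (1 / x)) ≤ ξ ^ 2 / 2 * ((Real.log ξ + 1) / ξ) :=
          mul_le_mul_of_nonneg_left hxlog (by positivity)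
        have hid2 : ξ ^ 2 / 2 * ((Real.log ξ + 1) / ξ) = ξ * (Real.log ξ + 1) / 2 := by
          field_simp
        rw [f_eq]
        rw [heq2] at key
        linarith [key, hfin, hid2.le]
      · rw [← h0]
        simp [f, Real.cos_zero]
        positivity
    have hm := intervalIntegral.integral_mono_on (by positivity)
      (f_intervalIntegrable le_rfl (by positivity) hinv) intervalIntegrable_const hpb
    rw [intervalIntegral.integral_const, smul_eq_mul] at hm
    have : (1 / ξ - 0) * (ξ * (Real.log ξ + 1) / 2) = (Real.log ξ + 1) / 2 := by
      field_simp
      ring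
    linarith [hm, this.le]
  have hp2 : ∫ x in (1 / ξ)..(Real.exp 1)⁻¹, f ξ x ≤ Real.log ξ ^ 2 - 1 := by
    have hpb : ∀ x ∈ Icc (1 / ξ) (Real.exp 1)⁻¹, f ξ x ≤ 2 * w x := by
      intro x hx
      have hx0 : (0 : ℝ) < x := lt_of_lt_of_le (by positivity) hx.1
      rw [f_eq]
      exact mul_le_mul_of_nonneg_right (one_sub_cos_le_two _)
        (w_nonneg hx0 (le_trans hx.2 inv_e_lt_one))
    have hm := intervalIntegral.integral_mono_on hinv
      (f_intervalIntegrable (by positivity) hinv le_rfl)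
      ((w_intervalIntegrable (by positivity) hinv).const_mul 2) hpb
    rw [intervalIntegral.integral_const_mul, integral_w (by positivity) hinv] at hm
    have h1 : Real.log (1 / ξ) ^ 2 = Real.log ξ ^ 2 := by
      rw [one_div, Real.log_inv]; ring
    have h2' : Real.log ((Real.exp 1)⁻¹) = -1 := by
      rw [Real.log_inv, Real.log_exp]
    rw [h1, h2'] at hm
    linarith [hm]
  rw [hIoo, hsplit]
  nlinarith [hp1, hp2, hL]

lemma positive {ξ : ℝ} (hξ : ξ ≠ 0) :
    0 < ∫ x in Ioo (0 : ℝ) (Real.exp 1)⁻¹, f ξ x := by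
  have habs : 0 < |ξ| := abs_pos.2 hξ
  set b := min (Real.exp 1)⁻¹ |ξ|⁻¹ with hbdef
  have hb0 : 0 < b := lt_min (by positivity) (by positivity)
  have hbe : b ≤ (Real.exp 1)⁻¹ := min_le_left _ _
  have hbξ : |ξ| * b ≤ 1 := by
    calc |ξ| * b ≤ |ξ| * |ξ|⁻¹ :=
          mul_le_mul_of_nonneg_left (min_le_right _ _) habs.le
      _ = 1 := mul_inv_cancel₀ (ne_of_gt habs)
  set N : ℝ := 9 / 32 * (|ξ| * (b / 4)) ^ 2 with hN
  have hN0 : 0 < N := by rw [hN]; positivity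
  have hpb : ∀ x ∈ Ioc (b / 4) (b / 2), N / (b / 2) ≤ f ξ x := by
    intro x hx
    have hx0 : 0 < x := lt_trans (by positivity) hx.1
    have hxb : x ≤ b / 2 := hx.2
    have ht1 : |ξ| * x ≤ 1 := by nlinarith [hbξ, habs]
    have hcosrw : Real.cos (ξ * x) = Real.cos (|ξ| * x) := by
      rw [← Real.cos_abs (ξ * x), abs_mul, abs_of_pos hx0]
    have hcos : 9 / 32 * (|ξ| * x) ^ 2 ≤ 1 - Real.cos (ξ * x) := by
      rw [hcosrw]; exact one_sub_cos_ge (by positivity) ht1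
    have hNle : N ≤ 9 / 32 * (|ξ| * x) ^ 2 := by
      rw [hN]
      have hle : |ξ| * (b / 4) ≤ |ξ| * x := by nlinarith [hx.1, habs]
      have hsq := pow_le_pow_left₀ (by positivity) hle 2
      linarith [hsq]
    have hxe : x ≤ (Real.exp 1)⁻¹ := by linarith
    have h1x : Real.exp 1 ≤ 1 / x := by
      rw [le_div_iff₀ hx0]
      calc Real.exp 1 * x ≤ Real.exp 1 * (Real.exp 1)⁻¹ :=
            mul_le_mul_of_nonneg_left hxe (Real.exp_pos 1).le
        _ = 1 := mul_inv_cancel₀ (ne_of_gt (Real.exp_pos 1))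
    have hlog1 : 1 ≤ Real.log (1 / x) := (Real.le_log_iff_exp_le (by positivity)).2 h1x
    have hnum : N ≤ (1 - Real.cos (ξ * x)) * Real.log (1 / x) := by
      calc N = N * 1 := (mul_one N).symm
        _ ≤ (1 - Real.cos (ξ * x)) * Real.log (1 / x) :=
            mul_le_mul (le_trans hNle hcos) hlog1 (by norm_num) (one_sub_cos_nonneg _)
    show N / (b / 2) ≤ (1 - Real.cos (ξ * x)) * Real.log (1 / x) / x
    exact div_le_div₀ (le_trans hN0.le hnum) hnum hx0 hxb
  have hfi : IntegrableOn (f ξ) (Ioc (b / 4) (b / 2)) :=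
    f_integrableOn_Ioc (by positivity) (by linarith)
  have hconst : (∫ _x in Ioc (b / 4) (b / 2), N / (b / 2)) ≤
      ∫ x in Ioc (b / 4) (b / 2), f ξ x :=
    setIntegral_mono_on
      (integrableOn_const measure_Ioc_lt_top.ne) hfi measurableSet_Ioc hpb
  have hvol : (∫ _x in Ioc (b / 4) (b / 2), N / (b / 2)) = (b / 2 - b / 4) * (N / (b / 2)) := by
    rw [setIntegral_const, smul_eq_mul, measureReal_def, Real.volume_Ioc,
      ENNReal.toReal_ofReal (by linarith)]
  have hquarter : b / 2 - b / 4 = b / 4 := by ring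
  have hpos : 0 < (b / 2 - b / 4) * (N / (b / 2)) := by
    rw [hquarter]; positivity
  have hsub : ∫ x in Ioc (b / 4) (b / 2), f ξ x ≤
      ∫ x in Ioo (0 : ℝ) (Real.exp 1)⁻¹, f ξ x := by
    apply setIntegral_mono_set (f_integrable ξ) (f_nonneg_ae ξ)
    apply HasSubset.Subset.eventuallyLE
    intro x hx
    exact ⟨lt_trans (by positivity) hx.1, lt_of_le_of_lt hx.2 (by linarith)⟩
  linarith

end Stmt18Aux

open Stmt18Aux

/-- The characteristic exponent `ψ(ξ) = 2∫₀^{1/e} (1-cos(ξx)) log(1/x) x⁻¹ dx`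
is strictly positive off the origin and grows like `(log ξ)²`. -/
theorem stmt_18 :
    (∀ ξ : ℝ, ξ ≠ 0 →
      0 < 2 * ∫ x in Ioo (0 : ℝ) (Real.exp 1)⁻¹,
        (1 - Real.cos (ξ * x)) * Real.log (1 / x) / x) ∧
    ∃ c₁ c₂ : ℝ, 0 < c₁ ∧ c₁ ≤ c₂ ∧ ∀ ξ : ℝ, Real.exp 2 ≤ ξ →
      c₁ * Real.log ξ ^ 2 ≤
          (2 * ∫ x in Ioo (0 : ℝ) (Real.exp 1)⁻¹,
            (1 - Real.cos (ξ * x)) * Real.log (1 / x) / x) ∧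
        (2 * ∫ x in Ioo (0 : ℝ) (Real.exp 1)⁻¹,
            (1 - Real.cos (ξ * x)) * Real.log (1 / x) / x) ≤
          c₂ * Real.log ξ ^ 2 := by
  have hrw : ∀ ξ : ℝ, (∫ x in Ioo (0 : ℝ) (Real.exp 1)⁻¹,
      (1 - Real.cos (ξ * x)) * Real.log (1 / x) / x)
      = ∫ x in Ioo (0 : ℝ) (Real.exp 1)⁻¹, f ξ x := fun _ => rfl
  constructor
  · intro ξ hξ
    rw [hrw]
    linarith [positive hξ]
  · refine ⟨1 / 256, 3, by norm_num, by norm_num, fun ξ hξ => ?_⟩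
    have hξ0 : (0 : ℝ) < ξ := lt_of_lt_of_le (Real.exp_pos 2) hξ
    constructor
    · rw [hrw]
      rcases le_or_gt (Real.exp 12) ξ with h | h
      · linarith [lower_large h, sq_nonneg (Real.log ξ)]
      · have hmid := lower_mid hξ
        have hL12 : Real.log ξ ≤ 12 := (Real.log_le_iff_le_exp hξ0).2 h.le
        have hL2 : 2 ≤ Real.log ξ := (Real.le_log_iff_exp_le hξ0).2 hξ
        nlinarith [hmid, mul_nonneg (by linarith : (0:ℝ) ≤ 12 - Real.log ξ)
          (by linarith : (0:ℝ) ≤ Real.log ξ)]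
    · rw [hrw]
      exact upper hξ
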